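/- Let u : ℕ → ℝ with u ∈ Λ. Then Δˢ_u = ∅ if and only if V(u) = L(u) (equality of the finite supremum with the limit superior taken in the extended reals). -/
import Mathlib


open Set Filter

/-- `V u` is the supremum of the sequence `u` (real `sSup`, junk value if unbounded). -/
noncomputable def V (u : ℕ → ℝ) : ℝ := sSup (Set.range u)

/-- `L u` is the limit superior of `u` taken in the extended reals. -/
noncomputable def L (u : ℕ → ℝ) : EReal :=
  Filter.limsup (fun n => ((u n : ℝ) : EReal)) Filter.atTop

/-- `u ∈ Λ` : the supremum of `u` is finite, i.e. `u` is bounded above. -/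
def MemLambda (u : ℕ → ℝ) : Prop := BddAbove (Set.range u)

/-- `Δ_u = {k : max_{0 ≤ j ≤ k} u_j ≥ sup_{j > k} u_j}`. -/
noncomputable def Delta (u : ℕ → ℝ) : Set ℕ :=
  {k | sSup (u '' Set.Ioi k) ≤ sSup (u '' Set.Iic k)}

/-- `Δˢ_u = {k : max_{0 ≤ j ≤ k} u_j > sup_{j > k} u_j}`. -/
noncomputable def DeltaS (u : ℕ → ℝ) : Set ℕ :=
  {k | sSup (u '' Set.Ioi k) < sSup (u '' Set.Iic k)}

/-- `Argmax u = {k : u k = V u}`. -/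
noncomputable def Argmax (u : ℕ → ℝ) : Set ℕ := {k | u k = V u}


/-- for u ∈ Λ, Δˢ_u = ∅ iff the supremum equals the limsup. -/
theorem deltaS_empty_iff (u : ℕ → ℝ) (hu : MemLambda u) :
    DeltaS u = ∅ ↔ ((V u : ℝ) : EReal) = L u := by
  have hbdd : BddAbove (Set.range u) := hu
  have hT_bdd : ∀ k, BddAbove (u '' Set.Ioi k) :=
    fun k => hbdd.mono (Set.image_subset_range u _)
  have hM_bdd : ∀ k, BddAbove (u '' Set.Iic k) :=
    fun k => hbdd.mono (Set.image_subset_range u _)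
  have hT_ne : ∀ k, (u '' Set.Ioi k).Nonempty :=
    fun k => ⟨u (k+1), Set.mem_image_of_mem u (by simp)⟩
  have hM_ne : ∀ k, (u '' Set.Iic k).Nonempty :=
    fun k => ⟨u k, Set.mem_image_of_mem u (by simp)⟩
  have hM_le_V : ∀ k, sSup (u '' Set.Iic k) ≤ V u :=
    fun k => csSup_le_csSup hbdd (hM_ne k) (Set.image_subset_range u _)
  have hL_le_V : L u ≤ ((V u : ℝ) : EReal) := by
    apply Filter.limsup_le_of_le
    · exact Filter.isCobounded_le_of_bot
    · exact Filter.Eventually.of_forall fun n =>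
        EReal.coe_le_coe_iff.mpr (le_csSup hbdd (Set.mem_range_self n))
  constructor
  · intro h
    have hMT : ∀ k, sSup (u '' Set.Iic k) ≤ sSup (u '' Set.Ioi k) := by
      intro k
      by_contra hc
      push_neg at hc
      exact absurd h (Set.Nonempty.ne_empty ⟨k, hc⟩)
    have hV_le_T : ∀ k, V u ≤ sSup (u '' Set.Ioi k) := by
      intro k
      apply csSup_le (Set.range_nonempty u)
      rintro x ⟨n, rfl⟩
      rcases le_or_gt n k with hn | hn
      · exact le_trans (le_csSup (hM_bdd k) (Set.mem_image_of_mem u hn)) (hMT k)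
      · exact le_csSup (hT_bdd k) (Set.mem_image_of_mem u hn)
    refine le_antisymm ?_ hL_le_V
    apply le_of_forall_lt
    intro c hc
    obtain ⟨r, hcr, hrV⟩ := EReal.lt_iff_exists_real_btwn.mp hc
    have hrV' : r < V u := EReal.coe_lt_coe_iff.mp hrV
    have hfreq : ∃ᶠ n in Filter.atTop, (r : EReal) ≤ (u n : EReal) := by
      rw [Filter.frequently_atTop]
      intro k
      obtain ⟨x, ⟨n, hn, rfl⟩, hrx⟩ :=
        exists_lt_of_lt_csSup (hT_ne k) (lt_of_lt_of_le hrV' (hV_le_T k))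
      exact ⟨n, le_of_lt hn, EReal.coe_le_coe_iff.mpr hrx.le⟩
    exact lt_of_lt_of_le hcr (Filter.le_limsup_of_frequently_le hfreq)
  · intro h
    rw [Set.eq_empty_iff_forall_notMem]
    intro k hk
    have hTk : sSup (u '' Set.Ioi k) < sSup (u '' Set.Iic k) := hk
    have hL_le_T : L u ≤ ((sSup (u '' Set.Ioi k) : ℝ) : EReal) := by
      apply Filter.limsup_le_of_le
      · exact Filter.isCobounded_le_of_bot
      · rw [Filter.eventually_atTop]
        exact ⟨k+1, fun n hn => EReal.coe_le_coe_iff.mpr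
          (le_csSup (hT_bdd k) (Set.mem_image_of_mem u (Set.mem_Ioi.mpr hn)))⟩
    have : ((V u : ℝ) : EReal) ≤ ((sSup (u '' Set.Ioi k) : ℝ) : EReal) :=
      h ▸ hL_le_T
    have hVT : V u ≤ sSup (u '' Set.Ioi k) := EReal.coe_le_coe_iff.mp this
    exact absurd (lt_of_lt_of_le hTk (le_trans (hM_le_V k) hVT)) (lt_irrefl _)
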